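/- arXiv:2412.08815 — 3 statements merged into one kernel-verified Lean document; each statement's English description precedes it below -/
import Mathlib

section
/- For every positive integer n with n ≡ 1 (mod 4), the discriminant of the polynomial p_n(X) = 1 + X + X² + ⋯ + Xⁿ is the square of a rational number. -/
open Polynomial

/-- The product `∏_{i<j} (α_i - α_j)^2` over a list of complex numbers. -/
noncomputable def pairProd (l : List ℂ) : ℂ :=
  ∏ i : Fin l.length, ∏ j : Fin l.length,
    if (i : ℕ) < (j : ℕ) then (l.get i - l.get j) ^ 2 else 1

/-- The discriminant `Δ(f) = a_n^{2n-2} ∏_{i<j} (α_i - α_j)^2` of a rational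
polynomial, where `α_1, …, α_n` are its complex zeros with multiplicity. -/
noncomputable def polyDisc (f : ℚ[X]) : ℂ :=
  (f.leadingCoeff : ℂ) ^ (2 * (f.natDegree : ℤ) - 2) * pairProd ((f.aroots ℂ).toList)

lemma pairProd_eq (l : List ℂ) :
    pairProd l = (-1 : ℂ) ^ (∑ i ∈ Finset.range l.length, (l.length - 1 - i)) *
      ∏ i : Fin l.length, ∏ j ∈ Finset.univ.erase i, (l.get i - l.get j) := by
  classical
  have hA : pairProd l = (∏ i : Fin l.length, ∏ j : Fin l.length,
      if (i : ℕ) < (j : ℕ) then (l.get i - l.get j) else 1) ^ 2 := by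
    simp only [pairProd, ← Finset.prod_pow]
    refine Finset.prod_congr rfl fun i _ => Finset.prod_congr rfl fun j _ => ?_
    split_ifs <;> simp
  have hB : (∏ i : Fin l.length, ∏ j : Fin l.length,
        if (j : ℕ) < (i : ℕ) then (l.get i - l.get j) else 1)
      = (∏ i : Fin l.length, ∏ j : Fin l.length, if (i : ℕ) < (j : ℕ) then (-1 : ℂ) else 1) *
        (∏ i : Fin l.length, ∏ j : Fin l.length,
          if (i : ℕ) < (j : ℕ) then (l.get i - l.get j) else 1) := by
    rw [Finset.prod_comm, ← Finset.prod_mul_distrib]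
    refine Finset.prod_congr rfl fun j _ => ?_
    rw [← Finset.prod_mul_distrib]
    refine Finset.prod_congr rfl fun i _ => ?_
    split_ifs <;> ring
  have key : ∀ i : Fin l.length, (∏ j ∈ Finset.univ.erase i, (l.get i - l.get j)) =
      (∏ j : Fin l.length, if (i : ℕ) < (j : ℕ) then (l.get i - l.get j) else 1) *
      (∏ j : Fin l.length, if (j : ℕ) < (i : ℕ) then (l.get i - l.get j) else 1) := by
    intro i
    rw [← Finset.prod_mul_distrib, ← Finset.filter_ne', Finset.prod_filter]
    refine Finset.prod_congr rfl fun j _ => ?_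
    by_cases hji : j = i
    · subst hji; simp
    · rw [if_pos hji]
      have hne : (j : ℕ) ≠ (i : ℕ) := fun h => hji (Fin.ext h)
      rcases lt_or_gt_of_ne hne with h | h
      · rw [if_neg (by omega), if_pos h, one_mul]
      · rw [if_pos h, if_neg (by omega), mul_one]
  have hS : (∏ i : Fin l.length, ∏ j : Fin l.length,
      if (i : ℕ) < (j : ℕ) then (-1 : ℂ) else 1)
      = (-1 : ℂ) ^ (∑ i ∈ Finset.range l.length, (l.length - 1 - i)) := by
    have h1 : ∀ i : Fin l.length, (∏ j : Fin l.length,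
        if (i : ℕ) < (j : ℕ) then (-1 : ℂ) else 1) = (-1 : ℂ) ^ (l.length - 1 - (i : ℕ)) := by
      intro i
      rw [Finset.prod_ite, Finset.prod_const, Finset.prod_const, one_pow, mul_one]
      congr 1
      have h2 : Finset.filter (fun j : Fin l.length => (i : ℕ) < (j : ℕ)) Finset.univ
          = Finset.Ioi i := by
        ext j
        simp only [Finset.mem_filter, Finset.mem_univ, true_and, Finset.mem_Ioi, Fin.lt_def]
      rw [h2, Fin.card_Ioi]
    rw [Finset.prod_congr rfl fun i _ => h1 i, Finset.prod_pow_eq_pow_sum,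
      Fin.sum_univ_eq_sum_range]
  calc pairProd l
      = ((-1 : ℂ) ^ (∑ i ∈ Finset.range l.length, (l.length - 1 - i))) ^ 2 * pairProd l := by
        rw [← pow_mul, mul_comm _ 2, pow_mul, neg_one_sq, one_pow, one_mul]
    _ = (-1 : ℂ) ^ (∑ i ∈ Finset.range l.length, (l.length - 1 - i)) *
      ∏ i : Fin l.length, ∏ j ∈ Finset.univ.erase i, (l.get i - l.get j) := by
        rw [Finset.prod_congr rfl fun i _ => key i, Finset.prod_mul_distrib, hB, hA, ← hS]
        ring

lemma prod_erase_eq_eval_derivative (l : List ℂ) (i : Fin l.length) :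
    (∏ j ∈ Finset.univ.erase i, (l.get i - l.get j))
      = eval (l.get i) (derivative (∏ k : Fin l.length, (X - C (l.get k)))) := by
  classical
  have hder : derivative (∏ k : Fin l.length, (X - C (l.get k)))
      = ∑ k : Fin l.length, ∏ j ∈ Finset.univ.erase k, (X - C (l.get j)) := by
    rw [Finset.prod_eq_multiset_prod, derivative_prod, Finset.sum_eq_multiset_sum]
    congr 1
    refine Multiset.map_congr rfl fun k _ => ?_
    rw [← Finset.erase_val, ← Finset.prod_eq_multiset_prod, derivative_X_sub_C, mul_one]
  rw [hder, eval_finset_sum, Finset.sum_eq_single i]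
  · simp [eval_prod]
  · intro k _ hki
    rw [eval_prod]
    refine Finset.prod_eq_zero (Finset.mem_erase.2 ⟨hki.symm, Finset.mem_univ i⟩) ?_
    simp
  · simp


/-- For `n ≡ 1 (mod 4)`, the polynomial `p_n = 1 + X + ⋯ + Xⁿ` has square discriminant. -/
theorem disc_geom_sum_is_square (n : ℕ) (hn : 0 < n) (hmod : n % 4 = 1) :
    ∃ q : ℚ, polyDisc (∑ i ∈ Finset.range (n + 1), (X : ℚ[X]) ^ i) = (q : ℂ) ^ 2 := by
  classical
  obtain ⟨k, hk⟩ : ∃ k, n = 4 * k + 1 := ⟨n / 4, by omega⟩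
  set f : ℚ[X] := ∑ i ∈ Finset.range (n + 1), (X : ℚ[X]) ^ i with hf
  have hfm : f.Monic := monic_geom_sum_X (by omega)
  have hmul : f * (X - 1) = X ^ (n + 1) - 1 := geom_sum_mul X (n + 1)
  have hdeg : f.natDegree = n := by
    have h1 : (f * (X - 1)).natDegree = n + 1 := by
      rw [hmul]
      simpa using natDegree_X_pow_sub_C (n := n + 1) (r := (1 : ℚ))
    have hx : (X - 1 : ℚ[X]) = X - C 1 := by rw [map_one]
    rw [hx, natDegree_mul hfm.ne_zero (X_sub_C_ne_zero 1), natDegree_X_sub_C] at h1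
    omega
  set p : ℂ[X] := f.map (algebraMap ℚ ℂ) with hp
  have hpm : p.Monic := hfm.map _
  have hpdeg : p.natDegree = n := by rw [hp, hfm.natDegree_map, hdeg]
  have hsplits : p.Splits := IsAlgClosed.splits p
  have hcard : p.roots.card = n := by rw [splits_iff_card_roots.1 hsplits, hpdeg]
  set l : List ℂ := (f.aroots ℂ).toList with hl
  have hcoe : (l : Multiset ℂ) = p.roots := by
    rw [hl, Multiset.coe_toList, aroots_def]
  have hlen : l.length = n := by
    rw [← Multiset.coe_card, hcoe, hcard]
  have hprod_eq : (∏ k : Fin l.length, (X - C (l.get k))) = p := by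
    have h1 := Fin.prod_univ_fun_getElem l (fun a => (X : ℂ[X]) - C a)
    simp only [List.get_eq_getElem] at h1 ⊢
    rw [h1, ← Multiset.prod_coe, ← Multiset.map_coe, hcoe]
    exact (hsplits.eq_prod_roots_of_monic hpm).symm
  -- mapped identity
  have hmulC : p * (X - 1) = X ^ (n + 1) - 1 := by
    have := congrArg (Polynomial.map (algebraMap ℚ ℂ)) hmul
    simpa [Polynomial.map_mul, Polynomial.map_sub, Polynomial.map_pow] using this
  have heval1 : p.eval 1 = (n : ℂ) + 1 := by
    rw [hp, eval_one_map, hf, eval_geom_sum]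
    simp
  -- root membership facts
  have hmem : ∀ i : Fin l.length, l.get i ∈ p.roots := by
    intro i
    rw [← hcoe]
    exact Multiset.mem_coe.2 (List.get_mem l i)
  have hroot : ∀ i : Fin l.length, p.eval (l.get i) = 0 := by
    intro i
    exact (mem_roots hpm.ne_zero).1 (hmem i)
  have hne1 : ∀ i : Fin l.length, l.get i ≠ 1 := by
    intro i hcon
    have := hroot i
    rw [hcon, heval1] at this
    exact Nat.cast_add_one_ne_zero n this
  -- derivative evaluation at roots
  have hder : ∀ i : Fin l.length,
      eval (l.get i) (derivative p) = ((n : ℂ) + 1) * (l.get i) ^ n / (l.get i - 1) := by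
    intro i
    have h := congrArg (fun q => eval (l.get i) (derivative q)) hmulC
    simp only [derivative_mul, derivative_sub, derivative_one, derivative_X_pow,
      derivative_X, map_one, eval_add, eval_mul, eval_sub, eval_one, eval_X, eval_pow,
      eval_natCast, eval_C, mul_one, hroot i, sub_zero, zero_mul, add_zero] at h
    have hsub : l.get i - 1 ≠ 0 := sub_ne_zero.2 (hne1 i)
    rw [eq_div_iff hsub, h, Nat.add_sub_cancel]
    push_cast
    ring
  have hodd : Odd n := Nat.odd_iff.2 (by omega)
  have hprodroots : (∏ i : Fin l.length, l.get i) = -1 := by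
    have h1 : (∏ i : Fin l.length, l.get i) = p.roots.prod := by
      have := Fin.prod_univ_getElem l
      simp only [List.get_eq_getElem] at this ⊢
      rw [this, ← Multiset.prod_coe, hcoe]
    have h2 := hsplits.coeff_zero_eq_prod_roots_of_monic hpm
    have h3 : p.coeff 0 = 1 := by
      rw [hp, coeff_map, hf]
      rw [finset_sum_coeff]
      simp [coeff_X_pow]
    rw [h3, hpdeg, hodd.neg_one_pow] at h2
    rw [h1]
    linear_combination h2
  have hprodsub : (∏ i : Fin l.length, (l.get i - 1)) = -((n : ℂ) + 1) := by
    have h1 : (∏ i : Fin l.length, ((1 : ℂ) - l.get i)) = (n : ℂ) + 1 := by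
      rw [← heval1, ← hprod_eq, eval_prod]
      simp
    have h2 : (∏ i : Fin l.length, (l.get i - 1))
        = ∏ i : Fin l.length, (-1 : ℂ) * (1 - l.get i) :=
      Finset.prod_congr rfl fun i _ => by ring
    rw [h2, Finset.prod_mul_distrib, Finset.prod_const, h1, Finset.card_univ,
      Fintype.card_fin, hlen, hodd.neg_one_pow]
    ring
  have hcne : ((n : ℂ) + 1) ≠ 0 := Nat.cast_add_one_ne_zero n
  have hD : (∏ i : Fin l.length, ∏ j ∈ Finset.univ.erase i, (l.get i - l.get j))
      = ((n : ℂ) + 1) ^ (n - 1) := by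
    calc (∏ i : Fin l.length, ∏ j ∈ Finset.univ.erase i, (l.get i - l.get j))
        = ∏ i : Fin l.length, ((n : ℂ) + 1) * (l.get i) ^ n / (l.get i - 1) := by
          refine Finset.prod_congr rfl fun i _ => ?_
          rw [prod_erase_eq_eval_derivative l i, hprod_eq, hder i]
      _ = (((n : ℂ) + 1) ^ l.length * (∏ i : Fin l.length, l.get i) ^ n) /
            (∏ i : Fin l.length, (l.get i - 1)) := by
          rw [Finset.prod_div_distrib, Finset.prod_mul_distrib, Finset.prod_const,
            Finset.prod_pow, Finset.card_univ, Fintype.card_fin]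
      _ = ((n : ℂ) + 1) ^ (n - 1) := by
          rw [hprodroots, hprodsub, hlen, hodd.neg_one_pow]
          have hpow : ((n : ℂ) + 1) ^ n = ((n : ℂ) + 1) ^ (n - 1) * ((n : ℂ) + 1) := by
            rw [← pow_succ, Nat.sub_add_cancel hn]
          rw [hpow, div_eq_iff (neg_ne_zero.2 hcne)]
          ring
  have hev : Even (∑ i ∈ Finset.range n, (n - 1 - i)) := by
    have h2 : (∑ i ∈ Finset.range n, (n - 1 - i)) = ∑ i ∈ Finset.range n, i :=
      Finset.sum_range_reflect (fun i => i) n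
    have h3 := Finset.sum_range_id_mul_two n
    obtain ⟨m, hm4⟩ : ∃ m, n * (n - 1) = 4 * m :=
      ⟨k * n, by rw [show n - 1 = 4 * k by omega]; ring⟩
    rw [hm4] at h3
    rw [h2, Nat.even_iff]
    omega
  have hsign : ((-1 : ℂ)) ^ (∑ i ∈ Finset.range l.length, (l.length - 1 - i)) = 1 := by
    rw [hlen]
    exact hev.neg_one_pow
  have hpair : pairProd l = ((n : ℂ) + 1) ^ (n - 1) := by
    rw [pairProd_eq, hsign, one_mul, hD]
  refine ⟨((n : ℚ) + 1) ^ ((n - 1) / 2), ?_⟩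
  rw [polyDisc, ← hl, hpair, hfm.leadingCoeff]
  rw [Rat.cast_one, one_zpow, one_mul]
  push_cast
  rw [← pow_mul]
  congr 1
  omega
end

section
/- Let f ∈ ℚ[X] be a polynomial of even degree and let k be an odd positive integer. Then the discriminant of the polynomial f(X)·f(X^k) is the square of a rational number. -/
open Polynomial

local notation "φ" => algebraMap ℚ ℂ

noncomputable def Pm (m : Multiset ℂ) : ℂ[X] := (m.map (fun y => X - C y)).prod
noncomputable def Em (m : Multiset ℂ) : ℂ :=
  (m.map (fun x => eval x (derivative (Pm m)))).prod

section Helpers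

lemma prod_swap' {M : Type*} [CommMonoid M] (s t : Multiset M) (F : M → M → M) :
    (s.map (fun x => (t.map (F x)).prod)).prod
      = (t.map (fun y => (s.map (fun x => F x y)).prod)).prod := by
  induction s using Multiset.induction_on with
  | empty => simp
  | cons a s ih => simp [ih, Multiset.prod_map_mul]

lemma prod_map_constmul {M : Type*} [CommMonoid M] (s : Multiset M) (c : M) (h : M → M) :
    (s.map (fun x => c * h x)).prod = c ^ Multiset.card s * (s.map h).prod := by
  rw [Multiset.prod_map_mul]; simp

lemma eval_prod_X_sub_C (t : Multiset ℂ) (x : ℂ) :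
    eval x ((t.map (fun y => X - C y)).prod) = (t.map (fun y => x - y)).prod := by
  rw [eval_multiset_prod, Multiset.map_map]
  simp [Function.comp]

lemma eval_Pm (t : Multiset ℂ) (x : ℂ) :
    eval x (Pm t) = (t.map (fun y => x - y)).prod := eval_prod_X_sub_C t x

lemma Pm_eval_root {m : Multiset ℂ} {x : ℂ} (hx : x ∈ m) : eval x (Pm m) = 0 := by
  rw [eval_Pm]
  exact Multiset.prod_eq_zero (Multiset.mem_map.2 ⟨x, hx, sub_self x⟩)

lemma card_aroots_eq (f : ℚ[X]) :
    Multiset.card (f.aroots ℂ) = f.natDegree := by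
  rw [aroots_def]
  exact ((IsAlgClosed.splits (f.map φ)).natDegree_eq_card_roots).symm.trans (natDegree_map _)

end Helpers

section PairProdBridge

lemma eval_deriv_fin {n : ℕ} (v : Fin n → ℂ) (i : Fin n) :
    eval (v i) (derivative (∏ j, (X - C (v j)))) = ∏ j ∈ ({i}ᶜ : Finset (Fin n)), (v i - v j) := by
  classical
  have h2 : derivative (∏ j, (X - C (v j)))
      = ∑ m : Fin n, ∏ j ∈ Finset.univ.erase m, (X - C (v j)) := by
    rw [Finset.prod_eq_multiset_prod, derivative_prod]
    rw [Finset.sum_eq_multiset_sum]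
    congr 1
    apply Multiset.map_congr rfl
    intro m _
    rw [derivative_X_sub_C, mul_one]
    rfl
  rw [h2, eval_finset_sum]
  rw [Finset.sum_eq_single i]
  · rw [eval_prod, Finset.compl_singleton]
    apply Finset.prod_congr rfl
    intro j _
    simp
  · intro m _ hmi
    rw [eval_prod]
    apply Finset.prod_eq_zero (Finset.mem_erase.2 ⟨hmi.symm, Finset.mem_univ i⟩)
    simp
  · intro h; exact absurd (Finset.mem_univ i) h

lemma prod_list_bridge {M : Type*} [CommMonoid M] (l : List ℂ) (f : ℂ → M) :
    ((↑l : Multiset ℂ).map f).prod = ∏ i : Fin l.length, f (l.get i) := by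
  rw [Multiset.map_coe, Multiset.prod_coe]
  conv_lhs => rw [← List.ofFn_get l, List.map_ofFn, List.prod_ofFn]
  rfl

lemma pairProd_toList (m : Multiset ℂ) (h4 : Multiset.card m % 4 = 0) :
    pairProd m.toList = Em m := by
  set l := m.toList with hl
  have hml : (↑l : Multiset ℂ) = m := Multiset.coe_toList m
  have hPm : Pm ↑l = ∏ j : Fin l.length, (X - C (l.get j)) := by
    rw [Pm, Multiset.map_coe, Multiset.prod_coe]
    conv_lhs => rw [← List.ofFn_get l, List.map_ofFn, List.prod_ofFn]
    rfl
  have hEm : Em m = ∏ i : Fin l.length, ∏ j ∈ ({i}ᶜ : Finset (Fin l.length)), (l.get i - l.get j) := by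
    rw [Em, ← hml, prod_list_bridge]
    apply Finset.prod_congr rfl
    intro i _
    rw [hPm, eval_deriv_fin (fun j => l.get j) i]
  have hpp : pairProd l = ∏ i : Fin l.length, ∏ j ∈ Finset.Ioi i, (l.get i - l.get j) ^ 2 := by
    rw [pairProd]
    apply Finset.prod_congr rfl
    intro i _
    rw [← Finset.prod_filter]
    apply Finset.prod_congr _ (fun _ _ => rfl)
    ext j
    simp only [Finset.mem_filter, Finset.mem_univ, true_and, Finset.mem_Ioi, Fin.lt_def]
  have hoff := Finset.prod_prod_Ioi_mul_eq_prod_prod_off_diag (fun a b => (l.get b - l.get a : ℂ))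
  have key : ∏ i : Fin l.length, ∏ j ∈ Finset.Ioi i, ((-1 : ℂ) * (l.get i - l.get j)^2)
      = Em m := by
    rw [hEm]
    have step1 : ∏ i : Fin l.length, ∏ j ∈ Finset.Ioi i, ((-1:ℂ) * (l.get i - l.get j)^2)
        = ∏ i : Fin l.length, ∏ j ∈ Finset.Ioi i, ((l.get i - l.get j) * (l.get j - l.get i)) :=
      Finset.prod_congr rfl fun i _ => Finset.prod_congr rfl fun j _ => by ring
    rw [step1, hoff]
  have hsign : ∏ i : Fin l.length, ∏ j ∈ Finset.Ioi i, ((-1 : ℂ) * (l.get i - l.get j)^2)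
      = (-1 : ℂ) ^ (∑ i : Fin l.length, (Finset.Ioi i).card) * pairProd l := by
    rw [hpp, ← Finset.prod_pow_eq_pow_sum, ← Finset.prod_mul_distrib]
    apply Finset.prod_congr rfl; intro i _
    rw [← Finset.prod_const, ← Finset.prod_mul_distrib]
  have hcard : ∑ i : Fin l.length, (Finset.Ioi i).card
      = ∑ i ∈ Finset.range l.length, (l.length - 1 - i) := by
    rw [← Fin.sum_univ_eq_sum_range (fun i => l.length - 1 - i) l.length]
    exact Finset.sum_congr rfl (fun i _ => Fin.card_Ioi i)
  have hev : Even (∑ i : Fin l.length, (Finset.Ioi i).card) := by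
    rw [hcard]
    have h1 : (∑ i ∈ Finset.range l.length, (l.length - 1 - i)) = ∑ i ∈ Finset.range l.length, i := by
      rw [← Finset.sum_range_reflect (fun i => i) l.length]
    have h2 := Finset.sum_range_id_mul_two l.length
    have hn4 : l.length % 4 = 0 := by
      rw [hl, Multiset.length_toList]; exact h4
    obtain ⟨c, hc⟩ : ∃ c, l.length = 4 * c := ⟨l.length / 4, by omega⟩
    rw [h1]
    have h3 : (∑ i ∈ Finset.range l.length, i) * 2 = 4 * (c * (l.length-1)) := by
      rw [h2, hc]; ring
    exact ⟨∑ i ∈ Finset.range l.length, i - c*(l.length-1), by omega⟩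
  rw [← key, hsign, Even.neg_one_pow hev, one_mul]

end PairProdBridge

section Rationality

lemma prodRootsRationalAux : ∀ (n : ℕ) (f g : ℚ[X]), f.natDegree = n →
    (∃ q : ℚ, ((f.aroots ℂ).map (fun x => eval x (g.map φ))).prod = φ q) := by
  intro n
  induction n using Nat.strong_induction_on with
  | _ n ih =>
  intro f g hn
  subst hn
  by_cases hdeg : f.natDegree = 0
  · by_cases hf : f = 0
    · exact ⟨1, by simp [hf]⟩
    · refine ⟨1, ?_⟩
      rw [Polynomial.eq_C_of_natDegree_eq_zero hdeg, aroots_C]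
      simp
  have hf : f ≠ 0 := fun h => hdeg (by simp [h])
  have hc : f.leadingCoeff ≠ 0 := leadingCoeff_ne_zero.2 hf
  set f₁ : ℚ[X] := f * C f.leadingCoeff⁻¹ with hf₁
  have hmonic : f₁.Monic := monic_mul_leadingCoeff_inv hf
  have hf₁0 : f₁ ≠ 0 := hmonic.ne_zero
  have haroots₁ : f₁.aroots ℂ = f.aroots ℂ := by
    rw [hf₁, aroots_def, aroots_def, Polynomial.map_mul, map_C, mul_comm,
      roots_C_mul _ (by simpa using inv_ne_zero hc)]
  have hdeg₁ : f₁.natDegree = f.natDegree := by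
    rw [hf₁, natDegree_mul hf (by simpa using inv_ne_zero hc), natDegree_C, add_zero]
  set s := f.aroots ℂ with hs
  have hcards : Multiset.card s = f.natDegree := card_aroots_eq f
  have hroot : ∀ x ∈ s, eval x (f₁.map φ) = 0 := by
    intro x hx
    rw [hs, aroots_def] at hx
    have := isRoot_of_mem_roots hx
    rw [hf₁, Polynomial.map_mul, eval_mul, this.eq_zero, zero_mul]
  set r : ℚ[X] := g %ₘ f₁ with hr
  have hmod : ∀ x ∈ s, eval x (g.map φ) = eval x (r.map φ) := by
    intro x hx
    conv_lhs => rw [← modByMonic_add_div g f₁]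
    rw [Polynomial.map_add, Polynomial.map_mul, eval_add, eval_mul, hroot x hx, zero_mul, add_zero]
  have hstep : ((s.map (fun x => eval x (g.map φ))).prod = (s.map (fun x => eval x (r.map φ))).prod) := by
    congr 1; exact Multiset.map_congr rfl hmod
  by_cases hr0 : r = 0
  · refine ⟨0, ?_⟩
    rw [hstep]
    obtain ⟨x, hx⟩ := Multiset.card_pos_iff_exists_mem.1 (by rw [hcards]; omega)
    rw [map_zero]
    apply Multiset.prod_eq_zero
    refine Multiset.mem_map.2 ⟨x, hx, ?_⟩
    simp [hr0]
  have hdegr : r.natDegree < f.natDegree := by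
    rw [← hdeg₁]
    exact natDegree_lt_natDegree hr0 (degree_modByMonic_lt g hmonic)
  set t := r.aroots ℂ with ht
  have hre : r.map φ = C (φ r.leadingCoeff) * (t.map fun a => X - C a).prod := by
    rw [ht, aroots_def]; have h := (IsAlgClosed.splits (r.map φ)).eq_prod_roots; rwa [leadingCoeff_map] at h
  have hfe : f₁.map φ = ((f₁.aroots ℂ).map fun a => X - C a).prod := by
    have := (IsAlgClosed.splits (f₁.map φ)).eq_prod_roots; rw [leadingCoeff_map] at this
    rwa [hmonic.leadingCoeff, map_one, C_1, one_mul, ← aroots_def] at this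
  obtain ⟨q', hq'⟩ := ih r.natDegree hdegr r f₁ rfl
  refine ⟨r.leadingCoeff ^ f.natDegree * ((-1) ^ (f.natDegree * Multiset.card t)) * q', ?_⟩
  rw [hstep]
  have h1 : (s.map (fun x => eval x (r.map φ))).prod
      = φ r.leadingCoeff ^ Multiset.card s * (s.map fun x => ((t.map fun y => x - y)).prod).prod := by
    rw [← prod_map_constmul]
    congr 1
    apply Multiset.map_congr rfl
    intro x _
    rw [hre, eval_mul, eval_C, eval_prod_X_sub_C]
  rw [h1, prod_swap']
  have h2 : (t.map fun y => ((s.map fun x => x - y)).prod).prod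
      = (t.map fun y => (-1 : ℂ) ^ Multiset.card s * eval y (f₁.map φ)).prod := by
    apply congr_arg
    apply Multiset.map_congr rfl
    intro y _
    rw [hfe, haroots₁, eval_prod_X_sub_C, ← prod_map_constmul]
    exact congr_arg _ (Multiset.map_congr rfl (fun x _ => by ring))
  rw [h2, prod_map_constmul]
  have h3 : (t.map fun y => eval y (f₁.map φ)).prod = φ q' := hq'
  rw [h3, hcards, ← pow_mul, map_mul, map_mul, map_pow, map_pow, map_neg, map_one]
  ring

lemma prodRootsRational (f g : ℚ[X]) :
    ∃ q : ℚ, ((f.aroots ℂ).map (fun x => eval x (g.map φ))).prod = φ q :=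
  prodRootsRationalAux _ f g rfl

end Rationality

/-- If `f` has even degree and `k` is odd, then `f(X)·f(X^k)` has square discriminant. -/
theorem disc_mul_comp_pow_is_square (f : ℚ[X]) (heven : Even f.natDegree)
    (k : ℕ) (hk : 0 < k) (hodd : Odd k) :
    ∃ q : ℚ, polyDisc (f * f.comp (X ^ k)) = (q : ℂ) ^ 2 := by
  by_cases hdeg0 : f.natDegree = 0
  · -- degenerate: f constant (possibly 0)
    obtain ⟨c, rfl⟩ : ∃ c, f = C c := ⟨f.coeff 0, (eq_C_of_natDegree_eq_zero hdeg0)⟩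
    have hP : (C c * (C c).comp (X ^ k) : ℚ[X]) = C (c * c) := by
      rw [C_comp, ← C_mul]
    rw [hP]
    refine ⟨(c*c)⁻¹, ?_⟩
    rw [polyDisc, aroots_C, Multiset.toList_zero]
    have hpp : pairProd ([] : List ℂ) = 1 := by
      have : ∀ i : Fin ([] : List ℂ).length, True := fun i => trivial
      simp [pairProd]
    rw [hpp, mul_one, leadingCoeff_C, natDegree_C]
    push_cast
    rw [zpow_neg, inv_pow]
    norm_num [zpow_ofNat]
  -- main case
  have hf : f ≠ 0 := fun h => hdeg0 (by simp [h])
  set n := f.natDegree with hn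
  obtain ⟨m', hm'⟩ := heven
  obtain ⟨j, hj⟩ := hodd
  set a := f.leadingCoeff with ha'
  have ha : a ≠ 0 := leadingCoeff_ne_zero.2 hf
  have hφa : (φ a : ℂ) ≠ 0 := by simpa using ha
  set G := f.comp (X ^ k) with hG
  have hXk : (X ^ k : ℚ[X]).natDegree = k := natDegree_X_pow k
  have hGdeg : G.natDegree = n * k := by rw [hG, natDegree_comp, hXk]
  have hGlc : G.leadingCoeff = a := by
    rw [hG, leadingCoeff_comp (by rw [hXk]; omega), leadingCoeff_X_pow, one_pow, mul_one]
  have hG0 : G ≠ 0 := fun h => ha (by rw [← hGlc, h, leadingCoeff_zero])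
  have hP0 : f * G ≠ 0 := mul_ne_zero hf hG0
  set s := f.aroots ℂ with hs
  set t := G.aroots ℂ with ht
  have hcards : Multiset.card s = n := card_aroots_eq f
  have hcardt : Multiset.card t = n * k := by rw [ht, card_aroots_eq, hGdeg]
  have hst : (f * G).aroots ℂ = s + t := aroots_mul hP0
  set M := n + n * k with hM
  have hM4' : M = 4 * (m' * (j + 1)) := by rw [hM, hm', hj]; ring
  have hPdeg : (f * G).natDegree = M := by rw [natDegree_mul hf hG0, hGdeg]
  have hPlc : (f * G).leadingCoeff = a * a := by rw [leadingCoeff_mul, hGlc]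
  have hEb : pairProd (((f * G).aroots ℂ).toList) = Em (s + t) := by
    rw [hst]
    exact pairProd_toList _ (by rw [Multiset.card_add, hcards, hcardt, ← hM, hM4']; omega)
  -- factorizations over ℂ
  have hfs : f.map φ = C (φ a) * Pm s := by
    rw [Pm, hs, aroots_def]; have h := (IsAlgClosed.splits (f.map φ)).eq_prod_roots; rwa [leadingCoeff_map] at h
  have hGs : G.map φ = C (φ a) * Pm t := by
    rw [Pm, ht, aroots_def]
    have h := (IsAlgClosed.splits (G.map φ)).eq_prod_roots; rw [leadingCoeff_map] at h
    rwa [hGlc] at h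
  set A := (s.map (fun x => eval x (Pm t))).prod with hA
  set B := (t.map (fun y => eval y (Pm s))).prod with hB
  -- additivity of Em
  have hPmadd : Pm (s + t) = Pm s * Pm t := by
    rw [Pm, Pm, Pm, Multiset.map_add, Multiset.prod_add]
  have hdadd : derivative (Pm (s + t)) = derivative (Pm s) * Pm t + Pm s * derivative (Pm t) := by
    rw [hPmadd, derivative_mul]
  have hEadd : Em (s + t) = (Em s * A) * (Em t * B) := by
    rw [Em, Multiset.map_add, Multiset.prod_add]
    congr 1
    · have hcg : ∀ x ∈ s, eval x (derivative (Pm (s + t)))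
          = eval x (derivative (Pm s)) * eval x (Pm t) := by
        intro x hx
        rw [hdadd, eval_add, eval_mul, eval_mul, Pm_eval_root hx, zero_mul, add_zero]
      rw [Multiset.map_congr rfl hcg, Multiset.prod_map_mul]
      rfl
    · have hcg : ∀ y ∈ t, eval y (derivative (Pm (s + t)))
          = eval y (Pm s) * eval y (derivative (Pm t)) := by
        intro y hy
        rw [hdadd, eval_add, eval_mul, eval_mul, Pm_eval_root hy, mul_zero, zero_add]
      rw [Multiset.map_congr rfl hcg, Multiset.prod_map_mul]
      exact mul_comm B (Em t)
  -- Em s is essentially rational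
  set w := (s.map (fun x => eval x ((derivative f).map φ))).prod with hw'
  obtain ⟨w₀, hw₀⟩ := prodRootsRational f (derivative f)
  have hderiv_f : ∀ x : ℂ, eval x ((derivative f).map φ) = φ a * eval x (derivative (Pm s)) := by
    intro x
    rw [← derivative_map, hfs, derivative_C_mul, eval_mul, eval_C]
  have hEms : φ a ^ n * Em s = w := by
    rw [hw', Em, ← hcards, ← prod_map_constmul]
    congr 1
    exact Multiset.map_congr rfl (fun x _ => (hderiv_f x).symm)
  -- A is essentially rational
  obtain ⟨A₀, hA₀⟩ := prodRootsRational f G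
  have hAr : φ a ^ n * A = φ A₀ := by
    rw [← hA₀, hA, ← hcards, ← prod_map_constmul]
    congr 1
    apply Multiset.map_congr rfl
    intro x _
    rw [hGs, eval_mul, eval_C]
  -- B = A
  have hnk_even : Even (n * k) := by
    exact ⟨m' * k, by rw [hm']; ring⟩
  have hBA : B = A := by
    rw [hB, hA]
    have e1 : (t.map fun y => eval y (Pm s)).prod
        = (t.map fun y => (s.map fun x => y - x).prod).prod := by
      congr 1; exact Multiset.map_congr rfl (fun y _ => eval_Pm s y)
    rw [e1, prod_swap' t s (fun y x => y - x)]
    apply congr_arg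
    apply Multiset.map_congr rfl
    intro x _
    have e2 : (t.map fun y => y - x).prod = (t.map fun y => (-1 : ℂ) * (x - y)).prod := by
      congr 1; exact Multiset.map_congr rfl (fun y _ => by ring)
    rw [e2, prod_map_constmul, hcardt, Even.neg_one_pow hnk_even, one_mul, eval_Pm]
  -- structure of t
  have htstruct : t = s.bind (fun α => (X ^ k - C α : ℂ[X]).roots) := by
    have h0notmem : (0 : ℂ[X]) ∉ s.map (fun α => X ^ k - C α) := by
      intro hmem
      obtain ⟨α, _, hα⟩ := Multiset.mem_map.1 hmem
      exact X_pow_sub_C_ne_zero hk α hα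
    have hGmap : G.map φ = C (φ a) * (s.map (fun α => X ^ k - C α)).prod := by
      rw [hG, Polynomial.map_comp, Polynomial.map_pow, map_X, hfs, mul_comp, C_comp, Pm,
        multiset_prod_comp, Multiset.map_map]
      congr 1
      apply congr_arg Multiset.prod
      apply Multiset.map_congr rfl
      intro α _
      simp only [Function.comp_apply, sub_comp, X_comp, C_comp]
    rw [ht, aroots_def, hGmap, roots_C_mul _ hφa, roots_multiset_prod _ h0notmem,
      Multiset.bind_map]
  -- facts about k-th roots
  have hrcard : ∀ α : ℂ, Multiset.card ((X ^ k - C α : ℂ[X]).roots) = k := by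
    intro α
    have h := splits_iff_card_roots.mp (IsAlgClosed.splits (X ^ k - C α))
    rw [natDegree_X_pow_sub_C] at h
    exact h
  have hrpow : ∀ (α y : ℂ), y ∈ (X ^ k - C α : ℂ[X]).roots → y ^ k = α := by
    intro α y hy
    have := isRoot_of_mem_roots hy
    rw [IsRoot, eval_sub, eval_pow, eval_X, eval_C, sub_eq_zero] at this
    exact this
  have hrprod : ∀ α : ℂ, ((X ^ k - C α : ℂ[X]).roots).prod = α := by
    intro α
    have hmono : (X ^ k - C α : ℂ[X]).Monic := monic_X_pow_sub_C α hk.ne'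
    have hcard : Multiset.card (X ^ k - C α : ℂ[X]).roots = (X ^ k - C α : ℂ[X]).natDegree := by
      rw [hrcard, natDegree_X_pow_sub_C]
    have hfact := prod_multiset_X_sub_C_of_monic_of_roots_card_eq hmono hcard
    have := congr_arg (eval 0) hfact
    rw [eval_prod_X_sub_C, eval_sub, eval_pow, eval_X, eval_C, zero_pow hk.ne', zero_sub] at this
    have e2 : ((X ^ k - C α : ℂ[X]).roots.map fun y => (0:ℂ) - y).prod
        = (-1 : ℂ) ^ k * ((X ^ k - C α : ℂ[X]).roots).prod := by
      have : ((X ^ k - C α : ℂ[X]).roots.map fun y => (0:ℂ) - y)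
          = ((X ^ k - C α : ℂ[X]).roots.map fun y => (-1 : ℂ) * y) := by
        exact Multiset.map_congr rfl (fun y _ => by ring)
      rw [this, prod_map_constmul, hrcard]
      congr 1
      exact congr_arg _ (Multiset.map_id' _)
    rw [e2, Odd.neg_one_pow ⟨j, by omega⟩, neg_mul, one_mul, neg_inj] at this
    exact this
  -- products over t
  have htprod : t.prod = s.prod := by
    rw [htstruct, Multiset.prod_bind]
    rw [Multiset.map_congr rfl (fun α _ => hrprod α), Multiset.map_id' s]
  -- Em t computation
  have hGcomp : G.map φ = (f.map φ).comp (X ^ k) := by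
    rw [hG, Polynomial.map_comp, Polynomial.map_pow, map_X]
  have hGderiv : ∀ y : ℂ, eval y (derivative (G.map φ))
      = (k : ℂ) * y ^ (k - 1) * eval (y ^ k) ((derivative f).map φ) := by
    intro y
    rw [hGcomp, derivative_comp, derivative_X_pow, eval_mul, eval_comp, eval_pow, eval_X,
      eval_mul, eval_C, eval_pow, eval_X, derivative_map]
  have hGd2 : ∀ y : ℂ, eval y (derivative (G.map φ)) = φ a * eval y (derivative (Pm t)) := by
    intro y
    rw [hGs, derivative_C_mul, eval_mul, eval_C]
  have hEmt : φ a ^ (n * k) * Em t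
      = (k : ℂ) ^ (n * k) * s.prod ^ (k - 1) * w ^ k := by
    rw [Em, ← hcardt, ← prod_map_constmul]
    have e1 : (t.map fun y => φ a * eval y (derivative (Pm t))).prod
        = (t.map fun y => (k : ℂ) * (y ^ (k - 1) * eval (y ^ k) ((derivative f).map φ))).prod := by
      congr 1
      apply Multiset.map_congr rfl
      intro y _
      rw [← hGd2, hGderiv]; ring
    rw [e1, prod_map_constmul, Multiset.prod_map_mul, hcardt]
    have e2 : (t.map fun y => y ^ (k - 1)).prod = t.prod ^ (k - 1) := by
      have := Multiset.prod_map_pow (m := t) (f := fun y : ℂ => y) (n := k - 1)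
      rw [this, Multiset.map_id' t]
    have e3 : (t.map fun y => eval (y ^ k) ((derivative f).map φ)).prod = w ^ k := by
      rw [htstruct, Multiset.map_bind, Multiset.prod_bind]
      have e4 : ∀ α ∈ s, (((X ^ k - C α : ℂ[X]).roots).map
          fun y => eval (y ^ k) ((derivative f).map φ)).prod
          = eval α ((derivative f).map φ) ^ k := by
        intro α _
        rw [Multiset.map_congr rfl (fun y hy => by rw [hrpow α y hy]),
          Multiset.map_const', Multiset.prod_replicate, hrcard]
      rw [Multiset.map_congr rfl e4, hw', ← Multiset.prod_map_pow]
    rw [e2, e3, htprod]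
    ring
  -- rationality of s.prod
  have hsprod : s.prod = φ (f.eval 0 / a) := by
    have h00 : eval 0 (f.map φ) = φ (f.eval 0) := by
      rw [eval_map, eval₂_at_zero, coeff_zero_eq_eval_zero]
    rw [hfs, eval_mul, eval_C, eval_Pm] at h00
    have e2 : (s.map fun y => (0:ℂ) - y).prod = (-1 : ℂ) ^ n * s.prod := by
      have e : (s.map fun y => (0:ℂ) - y) = (s.map fun y => (-1 : ℂ) * y) :=
        Multiset.map_congr rfl (fun y _ => by ring)
      rw [e, prod_map_constmul, hcards]
      congr 1
      exact congr_arg _ (Multiset.map_id' _)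
    rw [e2, Even.neg_one_pow ⟨m', hm'⟩, one_mul] at h00
    rw [map_div₀, eq_div_iff hφa, mul_comm, ← h00]
  -- assembling
  have h2M : 2 * M = n + n * k + n + n + n * (2 * j) := by rw [hM, hj]; ring
  have key : φ a ^ (2 * M) * Em (s + t)
      = (k : ℂ) ^ (n * k) * φ (f.eval 0 / a) ^ (k - 1) * φ w₀ ^ (k + 1)
        * φ a ^ (n * (2 * j)) * φ A₀ ^ 2 := by
    rw [hEadd, hBA, h2M, pow_add, pow_add, pow_add, pow_add]
    have expand : φ a ^ n * φ a ^ (n * k) * φ a ^ n * φ a ^ n * φ a ^ (n * (2 * j))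
          * (Em s * A * (Em t * A))
        = (φ a ^ n * Em s) * (φ a ^ (n * k) * Em t) * (φ a ^ n * A) * (φ a ^ n * A)
          * φ a ^ (n * (2 * j)) := by ring
    have hww : w = φ w₀ := hw₀
    rw [expand, hEms, hEmt, hAr, hsprod, hww]
    ring
  -- final assembly
  have hm'0 : m' ≠ 0 := fun h => hdeg0 (by rw [hm', h])
  have hM4 : 4 ≤ M := by
    have h1 : 1 ≤ m' * (j + 1) := Nat.one_le_iff_ne_zero.2 (by positivity)
    omega
  set u₀ := f.eval 0 / a with hu₀
  refine ⟨a ^ (M - 2) * (k:ℚ) ^ (m' * k) * u₀ ^ j * w₀ ^ (j + 1) * a ^ (n * j) * A₀, ?_⟩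
  set q : ℚ := a ^ (M - 2) * (k:ℚ) ^ (m' * k) * u₀ ^ j * w₀ ^ (j + 1) * a ^ (n * j) * A₀ with hq
  rw [polyDisc, hPlc, hPdeg, hEb]
  have hzp : ((a * a : ℚ) : ℂ) ^ (2 * (M:ℤ) - 2) = (φ a * φ a) ^ (2 * M - 2 : ℕ) := by
    rw [show ((a * a : ℚ) : ℂ) = φ a * φ a from by rw [← map_mul]; exact (eq_ratCast φ (a*a)).symm]
    rw [show (2 * (M:ℤ) - 2) = ((2 * M - 2 : ℕ) : ℤ) from by push_cast; omega, zpow_natCast]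
  rw [hzp]
  have e1 : (φ a * φ a) ^ (2 * M - 2 : ℕ) = φ a ^ (2 * M - 4) * φ a ^ (2 * M) := by
    rw [mul_pow, ← pow_add, ← pow_add]
    congr 1
    omega
  rw [e1, mul_assoc, key]
  have hLHS : φ a ^ (2*M-4) * ((k:ℂ)^(n*k) * φ u₀ ^ (k-1) * φ w₀ ^ (k+1) * φ a ^ (n*(2*j)) * φ A₀ ^ 2)
      = φ (a ^ (2*M-4) * ((k:ℚ)^(n*k) * u₀ ^ (k-1) * w₀ ^ (k+1) * a ^ (n*(2*j)) * A₀ ^ 2)) := by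
    simp only [map_mul, map_pow, map_natCast]
  rw [hLHS, show ((q:ℚ) : ℂ) = φ q from (eq_ratCast φ q).symm, ← map_pow]
  apply congr_arg
  have ek1 : k - 1 = 2 * j := by omega
  have ek2 : k + 1 = 2 * j + 2 := by omega
  have eM : 2 * M - 4 = 2 * (M - 2) := by omega
  have enk : n * k = 2 * (m' * k) := by rw [hm']; ring
  have enj : n * (2 * j) = 2 * (n * j) := by ring
  rw [eM, enk, ek1, ek2, enj, hq]
  ring
end

section
/- Let f ∈ ℚ[X] be a monic nonconstant polynomial of even degree n, let k be an odd positive integer, let g(X) = f(X^k), and let a_0 = g(0). Then Δ(f)·Δ(g) = (−1)^{n²k(k−1)/2} · k^{kn} · a_0^{k−1} · Δ(f)^{k+1}. -/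
open Polynomial

lemma prod_fin_map (l : List ℂ) (f : ℂ → ℂ) :
    (∏ i : Fin l.length, f (l.get i)) = (l.map f).prod := by
  induction l with
  | nil => simp
  | cons a l ih => simp [Fin.prod_univ_succ, ih]

lemma pairProd_cons (a : ℂ) (l : List ℂ) :
    pairProd (a :: l) = (l.map fun b => (a - b) ^ 2).prod * pairProd l := by
  rw [pairProd, pairProd]
  simp only [List.length_cons]
  rw [Fin.prod_univ_succ]
  congr 1
  · rw [Fin.prod_univ_succ]
    simp only [Fin.val_zero, Fin.val_succ, lt_self_iff_false, if_false, one_mul,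
      Nat.zero_lt_succ, if_true, List.get_cons_succ, List.get_cons_zero]
    exact prod_fin_map l (fun b => (a - b) ^ 2)
  · refine Finset.prod_congr rfl (fun i _ => ?_)
    rw [Fin.prod_univ_succ]
    simp only [Fin.val_zero, Fin.val_succ, Nat.not_lt_zero, if_false, one_mul,
      Nat.succ_lt_succ_iff, List.get_cons_succ]
    rfl

noncomputable def E : List ℂ → ℂ
  | [] => 1
  | a :: l => ((l.map fun b => (a - b) * (b - a)).prod) * E l

lemma E_nil : E [] = 1 := rfl
lemma E_cons (a : ℂ) (l : List ℂ) :
    E (a :: l) = ((l.map fun b => (a - b) * (b - a)).prod) * E l := rfl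

lemma E_perm {l l' : List ℂ} (h : l.Perm l') : E l = E l' := by
  induction h with
  | nil => rfl
  | cons a h ih => rw [E_cons, E_cons, ih, (h.map _).prod_eq]
  | swap a b l => simp only [E_cons, List.map_cons, List.prod_cons]; ring
  | trans h1 h2 ih1 ih2 => exact ih1.trans ih2

lemma E_coe {l l' : List ℂ} (h : (l : Multiset ℂ) = (l' : Multiset ℂ)) : E l = E l' :=
  E_perm (Multiset.coe_eq_coe.mp h)

lemma map_neg_sq (a : ℂ) (l : List ℂ) :
    (l.map fun b => (a - b) * (b - a)).prod
      = (-1 : ℂ) ^ l.length * (l.map fun b => (a - b) ^ 2).prod := by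
  induction l with
  | nil => simp
  | cons b l ih => simp only [List.map_cons, List.prod_cons, List.length_cons, ih, pow_succ]; ring

lemma E_eq (l : List ℂ) : E l = (-1 : ℂ) ^ (l.length.choose 2) * pairProd l := by
  induction l with
  | nil => simp [E_nil, pairProd]
  | cons a l ih =>
    rw [E_cons, pairProd_cons, map_neg_sq, ih, List.length_cons,
      Nat.choose_succ_succ, Nat.choose_one_right, pow_add]
    ring

lemma pairProd_eq_s11 (l : List ℂ) : pairProd l = (-1 : ℂ) ^ (l.length.choose 2) * E l := by
  rw [E_eq, ← mul_assoc, ← pow_add]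
  rw [Even.neg_one_pow ⟨l.length.choose 2, by ring⟩, one_mul]

lemma E_append (l₁ l₂ : List ℂ) :
    E (l₁ ++ l₂) = E l₁ * E l₂ *
      (l₁.map fun a => (l₂.map fun b => (a - b) * (b - a)).prod).prod := by
  induction l₁ with
  | nil => simp [E_nil]
  | cons a l₁ ih =>
    simp only [List.cons_append, E_cons, List.map_append, List.prod_append, List.map_cons,
      List.prod_cons, ih]
    ring

lemma E_eq_erase (l : List ℂ) :
    E l = (l.map fun r => (((l : Multiset ℂ).erase r).map fun a => r - a).prod).prod := by
  induction l with
  | nil => simp [E_nil]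
  | cons a l ih =>
    have hcoe : ((a :: l : List ℂ) : Multiset ℂ) = a ::ₘ (l : Multiset ℂ) := rfl
    rw [E_cons, List.map_cons, List.prod_cons, hcoe, Multiset.erase_cons_head]
    have hpt : (l.map fun r => (((a ::ₘ (l : Multiset ℂ)).erase r).map fun x => r - x).prod)
        = l.map fun r => (r - a) * ((((l : Multiset ℂ)).erase r).map fun x => r - x).prod := by
      refine List.map_congr_left (fun r hr => ?_)
      by_cases h : r = a
      · subst h
        rw [Multiset.erase_cons_head, sub_self, zero_mul]
        exact Multiset.prod_eq_zero (Multiset.mem_map.2 ⟨r, by simpa using hr, sub_self r⟩)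
      · rw [Multiset.erase_cons_tail _ (Ne.symm h), Multiset.map_cons, Multiset.prod_cons]
    rw [hpt]
    have h1 : ((l : Multiset ℂ).map fun x => a - x).prod = (l.map fun b => a - b).prod := by
      simp [Multiset.map_coe, Multiset.prod_coe]
    rw [h1]
    simp only [List.prod_map_mul]
    rw [← ih]
    ring

section Blocks
variable {k : ℕ}

lemma card_nthRoots_eq (hk : 0 < k) (α : ℂ) : Multiset.card (nthRoots k α) = k := by
  have hs : ((X : ℂ[X]) ^ k - C α).Splits := IsAlgClosed.splits _
  have h := (Polynomial.splits_iff_card_roots).1 hs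
  rw [natDegree_X_pow_sub_C] at h
  exact h

lemma prod_X_sub_C_nthRoots (hk : 0 < k) (α : ℂ) :
    ((nthRoots k α).map fun b => X - C b).prod = X ^ k - C α :=
  prod_multiset_X_sub_C_of_monic_of_roots_card_eq (monic_X_pow_sub_C α hk.ne')
    (by rw [natDegree_X_pow_sub_C]; exact card_nthRoots_eq hk α)

lemma prod_sub_nthRoots (hk : 0 < k) (α x : ℂ) :
    ((nthRoots k α).map fun b => x - b).prod = x ^ k - α := by
  have h := congrArg (Polynomial.eval x) (prod_X_sub_C_nthRoots hk α)
  rw [eval_sub, eval_pow, eval_X, eval_C, eval_multiset_prod, Multiset.map_map] at h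
  rw [← h]
  congr 1
  refine Multiset.map_congr rfl (fun b _ => ?_)
  simp

lemma prod_nthRoots (hk : 0 < k) (hodd : Odd k) (α : ℂ) : (nthRoots k α).prod = α := by
  have h := prod_sub_nthRoots hk α 0
  rw [zero_pow hk.ne', zero_sub] at h
  have h2 : ((nthRoots k α).map fun b => (0 : ℂ) - b).prod
      = (-1 : ℂ) ^ k * (nthRoots k α).prod := by
    simp only [zero_sub]
    rw [show (fun b => -b : ℂ → ℂ) = Neg.neg from rfl, Multiset.prod_map_neg,
      card_nthRoots_eq hk]
  rw [h2, hodd.neg_one_pow, neg_mul, one_mul, neg_inj] at h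
  exact h

lemma toList_map_prod (s : Multiset ℂ) (f : ℂ → ℂ) : (s.toList.map f).prod = (s.map f).prod := by
  conv_rhs => rw [← Multiset.coe_toList s]
  rw [Multiset.map_coe, Multiset.prod_coe]

lemma E_block (hk : 0 < k) (hodd : Odd k) (α : ℂ) :
    E ((nthRoots k α).toList) = (k : ℂ) ^ k * α ^ (k - 1) := by
  classical
  have hcoe : (((nthRoots k α).toList : List ℂ) : Multiset ℂ) = nthRoots k α :=
    Multiset.coe_toList _
  rw [E_eq_erase, hcoe]
  have hpt : ((nthRoots k α).toList.map fun r => (((nthRoots k α).erase r).map fun b => r - b).prod)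
      = (nthRoots k α).toList.map fun r => (k : ℂ) * r ^ (k - 1) := by
    refine List.map_congr_left (fun r hr => ?_)
    have hrm : r ∈ nthRoots k α := Multiset.mem_toList.1 hr
    rw [← eval_multiset_prod_X_sub_C_derivative hrm, prod_X_sub_C_nthRoots hk]
    rw [derivative_sub, derivative_X_pow, derivative_C, sub_zero]
    simp
  rw [hpt, List.prod_map_mul]
  have h1 : ((nthRoots k α).toList.map fun _ => (k : ℂ)).prod = (k : ℂ) ^ k := by
    rw [List.map_const', List.prod_replicate, Multiset.length_toList, card_nthRoots_eq hk]
  have h2 : ((nthRoots k α).toList.map fun r => r ^ (k - 1)).prod = α ^ (k - 1) := by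
    rw [toList_map_prod]
    rw [show (fun r : ℂ => r ^ (k-1)) = (fun r : ℂ => id r ^ (k-1)) from rfl,
      Multiset.prod_map_pow]
    simp [Multiset.map_id', prod_nthRoots hk hodd]
  rw [h1, h2]

lemma cross_block (hk : 0 < k) (hodd : Odd k) (a α' x : ℂ) (hx : x ^ k = a) :
    ((nthRoots k α').toList.map fun y => (x - y) * (y - x)).prod = (a - α') * (α' - a) := by
  rw [List.prod_map_mul]
  have h1 : ((nthRoots k α').toList.map fun y => x - y).prod = a - α' := by
    rw [toList_map_prod, prod_sub_nthRoots hk, hx]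
  have h2 : ((nthRoots k α').toList.map fun y => y - x).prod = α' - a := by
    have : ((nthRoots k α').toList.map fun y => y - x)
        = ((nthRoots k α').toList.map fun y => x - y).map Neg.neg := by
      rw [List.map_map]; exact List.map_congr_left (fun y _ => by simp)
    rw [this, List.prod_map_neg, h1, List.length_map, Multiset.length_toList,
      card_nthRoots_eq hk, hodd.neg_one_pow]
    ring
  rw [h1, h2]

lemma inner_cross (hk : 0 < k) (hodd : Odd k) (a x : ℂ) (hx : x ^ k = a) (L : List ℂ) :
    ((L.flatMap fun α => (nthRoots k α).toList).map fun y => (x - y) * (y - x)).prod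
      = (L.map fun b => (a - b) * (b - a)).prod := by
  induction L with
  | nil => simp
  | cons b L ih =>
    rw [List.flatMap_cons, List.map_append, List.prod_append, ih, List.map_cons, List.prod_cons,
      cross_block hk hodd a b x hx]

lemma E_bind (hk : 0 < k) (hodd : Odd k) (L : List ℂ) :
    E (L.flatMap fun α => (nthRoots k α).toList) =
      (k : ℂ) ^ (k * L.length) * L.prod ^ (k - 1) * E L ^ k := by
  induction L with
  | nil => simp [E_nil]
  | cons a L ih =>
    rw [List.flatMap_cons, E_append, E_block hk hodd a, ih]
    have hcross : ((nthRoots k a).toList.map fun x =>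
        (((L.flatMap fun α => (nthRoots k α).toList)).map fun y => (x - y) * (y - x)).prod).prod
        = ((L.map fun b => (a - b) * (b - a)).prod) ^ k := by
      have h : ((nthRoots k a).toList.map fun x =>
          (((L.flatMap fun α => (nthRoots k α).toList)).map fun y => (x - y) * (y - x)).prod)
          = (nthRoots k a).toList.map fun _ => (L.map fun b => (a - b) * (b - a)).prod := by
        refine List.map_congr_left (fun x hx => ?_)
        exact inner_cross hk hodd a x ((mem_nthRoots hk).1 (Multiset.mem_toList.1 hx)) L
      rw [h, List.map_const', List.prod_replicate, Multiset.length_toList, card_nthRoots_eq hk]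
    rw [hcross, E_cons, List.length_cons, List.prod_cons]
    ring

end Blocks

lemma par1 {n k : ℕ} (hn : 0 < n) (he : Even n) (hk : Odd k) :
    Even (n.choose 2 + (n * k).choose 2) := by
  rw [Nat.choose_two_right, Nat.choose_two_right]
  obtain ⟨m, hm⟩ := he
  have e1 : n * (n - 1) / 2 = m * (n - 1) := by
    have h2 : n * (n - 1) = 2 * (m * (n - 1)) := by
      generalize n - 1 = d; rw [hm]; ring
    rw [h2, Nat.mul_div_cancel_left _ (by norm_num : 0 < 2)]
  have e2 : n * k * (n * k - 1) / 2 = m * k * (n * k - 1) := by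
    have h2 : n * k * (n * k - 1) = 2 * (m * k * (n * k - 1)) := by
      generalize n * k - 1 = d; rw [hm]; ring
    rw [h2, Nat.mul_div_cancel_left _ (by norm_num : 0 < 2)]
  rw [e1, e2]
  have ho1 : Odd (n - 1) := Nat.Even.sub_odd hn ⟨m, hm⟩ odd_one
  have he2 : Even (n * k) := ⟨m * k, by rw [hm]; ring⟩
  have ho2 : Odd (n * k - 1) :=
    Nat.Even.sub_odd (Nat.one_le_of_lt (by nlinarith [hk.pos] : 0 < n * k)) he2 odd_one
  rcases Nat.even_or_odd m with hme | hmo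
  · exact (hme.mul_right _).add ((hme.mul_right k).mul_right _)
  · exact (hmo.mul ho1).add_odd ((hmo.mul hk).mul ho2)

lemma par3 {n k : ℕ} (he : Even n) : Even (n ^ 2 * k * (k - 1) / 2) := by
  obtain ⟨m, hm⟩ := he
  have h4 : n ^ 2 * k * (k - 1) = 2 * (2 * (m ^ 2 * k * (k - 1))) := by
    generalize k - 1 = d; rw [hm]; ring
  rw [h4, Nat.mul_div_cancel_left _ (by norm_num : 0 < 2)]
  exact ⟨m ^ 2 * k * (k - 1), by ring⟩


/-- For `f` monic nonconstant of even degree `n`, `k` odd, `g = f(X^k)`, `a₀ = g(0)`: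
`Δ(f)·Δ(g) = (-1)^(n²k(k-1)/2) · k^(kn) · a₀^(k-1) · Δ(f)^(k+1)`. -/
theorem disc_mul_disc_comp_pow (f : ℚ[X]) (hmonic : f.Monic)
    (hnc : 0 < f.natDegree) (heven : Even f.natDegree)
    (k : ℕ) (hk : 0 < k) (hodd : Odd k) :
    polyDisc f * polyDisc (f.comp (X ^ k)) =
      (-1) ^ (f.natDegree ^ 2 * k * (k - 1) / 2) * (k : ℂ) ^ (k * f.natDegree) *
        ((f.comp (X ^ k)).coeff 0 : ℂ) ^ (k - 1) * polyDisc f ^ (k + 1) := by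
  classical
  set n := f.natDegree with hn
  set g := f.comp (X ^ k) with hgdef
  set R := f.aroots ℂ with hRdef
  -- basic facts
  have hfm : (f.map (algebraMap ℚ ℂ)).Monic := hmonic.map _
  have hdegmap : (f.map (algebraMap ℚ ℂ)).natDegree = n := hmonic.natDegree_map _
  have hsplit : Splits (f.map (algebraMap ℚ ℂ)) := IsAlgClosed.splits _
  have hcard' : Multiset.card (f.map (algebraMap ℚ ℂ)).roots = (f.map (algebraMap ℚ ℂ)).natDegree :=
    splits_iff_card_roots.1 hsplit
  have hcard : Multiset.card R = n := by rw [hRdef, aroots_def]; rw [hcard', hdegmap]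
  have hmap : f.map (algebraMap ℚ ℂ) = (R.map fun a => X - C a).prod := by
    rw [hRdef, aroots_def]
    exact (prod_multiset_X_sub_C_of_monic_of_roots_card_eq hfm hcard').symm
  have hgm : g.Monic := hmonic.comp (monic_X_pow k) (by rw [natDegree_X_pow]; exact hk.ne')
  have hgdeg : g.natDegree = n * k := by rw [hgdef, natDegree_comp, natDegree_X_pow, hn]
  -- roots of g
  have haroots : g.aroots ℂ = R.bind (nthRoots k) := by
    rw [aroots_def, hgdef, Polynomial.map_comp, Polynomial.map_pow, map_X, hmap]
    have hcomp : ((R.map fun a => X - C a).prod).comp ((X : ℂ[X]) ^ k)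
        = (R.map fun a => (X : ℂ[X]) ^ k - C a).prod := by
      have : ∀ p : ℂ[X], p.comp ((X : ℂ[X]) ^ k) = eval₂RingHom (C : ℂ →+* ℂ[X]) ((X:ℂ[X]) ^ k) p :=
        fun p => rfl
      rw [this, map_multiset_prod, Multiset.map_map]
      congr 1
      refine Multiset.map_congr rfl (fun a _ => ?_)
      simp [coe_eval₂RingHom]
    rw [hcomp, roots_multiset_prod]
    · rw [Multiset.bind_map]
      rfl
    · intro h0
      obtain ⟨a, _, ha⟩ := Multiset.mem_map.1 h0
      exact (monic_X_pow_sub_C a hk.ne').ne_zero ha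
  -- constant coefficient
  have hg0 : ((g.coeff 0 : ℚ) : ℂ) = R.prod := by
    have h1 : g.coeff 0 = f.eval 0 := by
      rw [hgdef, coeff_zero_eq_eval_zero, eval_comp, eval_pow, eval_X, zero_pow hk.ne']
    have h2 : ((f.eval 0 : ℚ) : ℂ) = (f.map (algebraMap ℚ ℂ)).eval 0 := by
      rw [eval_map, eval₂_at_zero, coeff_zero_eq_eval_zero, eq_ratCast]
    have h3 : (f.map (algebraMap ℚ ℂ)).eval 0 = R.prod := by
      rw [hmap, eval_multiset_prod, Multiset.map_map]
      simp only [Function.comp]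
      have : (R.map fun a => eval 0 (X - C a)) = R.map (Neg.neg) := by
        refine Multiset.map_congr rfl (fun a _ => ?_)
        simp
      rw [this, Multiset.prod_map_neg, hcard, heven.neg_one_pow, one_mul]
    rw [h1, h2, h3]
  -- lists
  set L := R.toList with hLdef
  have hLlen : L.length = n := (Multiset.length_toList R).trans hcard
  have hLprod : L.prod = R.prod := Multiset.prod_toList R
  have hdiscf : polyDisc f = pairProd L := by
    rw [polyDisc, hmonic.leadingCoeff, Rat.cast_one, one_zpow, one_mul]
  have hdiscg : polyDisc g = pairProd ((g.aroots ℂ).toList) := by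
    rw [polyDisc, hgm.leadingCoeff, Rat.cast_one, one_zpow, one_mul]
  have hglen : ((g.aroots ℂ).toList).length = n * k := by
    rw [Multiset.length_toList, aroots_def, splits_iff_card_roots.1 (IsAlgClosed.splits _),
      (hgm.natDegree_map _ : (g.map (algebraMap ℚ ℂ)).natDegree = g.natDegree), hgdeg]
  have hEg : E ((g.aroots ℂ).toList) = E (L.flatMap fun a => (nthRoots k a).toList) := by
    refine E_coe ?_
    rw [Multiset.coe_toList, haroots, ← Multiset.coe_bind, hLdef, Multiset.coe_toList]
    refine Multiset.bind_congr (fun a _ => ?_)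
    rw [Multiset.coe_toList]
  -- put it together
  rw [hdiscf, hdiscg, pairProd_eq_s11, pairProd_eq_s11, hEg, E_bind hk hodd, hLlen, hLprod, hglen, hg0]
  have s1 : (-1 : ℂ) ^ (n.choose 2) * (-1 : ℂ) ^ ((n * k).choose 2) = 1 := by
    rw [← pow_add]; exact Even.neg_one_pow (par1 hnc heven hodd)
  have s2 : ((-1 : ℂ) ^ (n.choose 2)) ^ (k + 1) = 1 := by
    rw [← pow_mul]
    obtain ⟨t, ht⟩ := hodd
    exact Even.neg_one_pow (Even.mul_left ⟨t + 1, by omega⟩ _)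
  have s3 : ((-1 : ℂ)) ^ (n ^ 2 * k * (k - 1) / 2) = 1 := Even.neg_one_pow (par3 heven)
  rw [s3, mul_pow, s2]
  linear_combination (E L * ((k : ℂ) ^ (k * n) * R.prod ^ (k - 1) * E L ^ k)) * s1
end
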